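/- Strict monotonicity of the speed ratio in the remaining resource level: assume 0 < φ ≤ 1, 0 < μ ≤ ψ, ω > 0, and at least one of φ < 1 or μ < ψ, and fix R⁺ > 0. Then the function s(a) = I₁(a, R⁺)/I₂(a, R⁺) is strictly decreasing on (0, R⁺): for 0 < a₁ < a₂ < R⁺ one has s(a₁) > s(a₂). -/
import Mathlib


open Real Filter intervalIntegral

/-- Nondimensional stationary-to-moving switching rate. -/
noncomputable def ksm (φ R : ℝ) : ℝ := φ - (φ - 1) * Real.exp (-R)

/-- Nondimensional moving-to-stationary switching rate. -/
noncomputable def kms (ψ μ ω R : ℝ) : ℝ := ψ - (ψ - μ) * Real.exp (-ω * R)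

/-- I₁(a,b) = ∫_a^b k_sm(r)/r dr. -/
noncomputable def I1 (φ a b : ℝ) : ℝ := ∫ r in a..b, ksm φ r / r

/-- I₂(a,b) = ∫_a^b k_ms(r)/r dr. -/
noncomputable def I2 (ψ μ ω a b : ℝ) : ℝ := ∫ r in a..b, kms ψ μ ω r / r

lemma ksm_pos {φ : ℝ} (hφ0 : 0 < φ) (hφ1 : φ ≤ 1) (R : ℝ) : 0 < ksm φ R := by
  have := Real.exp_pos (-R)
  unfold ksm; nlinarith

lemma kms_pos {ψ μ ω : ℝ} (hμ0 : 0 < μ) (hμψ : μ ≤ ψ) (hω : 0 < ω) {R : ℝ}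
    (hR : 0 ≤ R) : 0 < kms ψ μ ω R := by
  have h1 : Real.exp (-ω * R) ≤ 1 := by
    rw [Real.exp_le_one_iff]; nlinarith
  have := Real.exp_pos (-ω * R)
  unfold kms; nlinarith

lemma cross {φ ψ μ ω : ℝ} (hφ0 : 0 < φ) (hφ1 : φ ≤ 1) (hμ0 : 0 < μ) (hμψ : μ ≤ ψ)
    (hω : 0 < ω) (hne : φ < 1 ∨ μ < ψ) {r s : ℝ} (hr : 0 ≤ r) (hrs : r < s) :
    ksm φ s * kms ψ μ ω r < ksm φ r * kms ψ μ ω s := by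
  have hs : 0 ≤ s := hr.trans hrs.le
  have hFs := ksm_pos hφ0 hφ1 s
  have hFr := ksm_pos hφ0 hφ1 r
  have hGr := kms_pos hμ0 hμψ hω hr
  have hGs := kms_pos hμ0 hμψ hω hs
  have he : Real.exp (-s) < Real.exp (-r) := Real.exp_lt_exp.mpr (by linarith)
  have hf : Real.exp (-ω * s) < Real.exp (-ω * r) := Real.exp_lt_exp.mpr (by nlinarith)
  have hFle : ksm φ s ≤ ksm φ r := by unfold ksm; nlinarith
  have hGle : kms ψ μ ω r ≤ kms ψ μ ω s := by unfold kms; nlinarith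
  rcases hne with h | h
  · have hF : ksm φ s < ksm φ r := by unfold ksm; nlinarith
    calc ksm φ s * kms ψ μ ω r < ksm φ r * kms ψ μ ω r :=
          mul_lt_mul_of_pos_right hF hGr
      _ ≤ ksm φ r * kms ψ μ ω s := mul_le_mul_of_nonneg_left hGle hFr.le
  · have hG : kms ψ μ ω r < kms ψ μ ω s := by unfold kms; nlinarith
    calc ksm φ s * kms ψ μ ω r ≤ ksm φ r * kms ψ μ ω r :=
          mul_le_mul_of_nonneg_right hFle hGr.le
      _ < ksm φ r * kms ψ μ ω s := mul_lt_mul_of_pos_left hG hFr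

lemma integrable_div {f : ℝ → ℝ} (hf : Continuous f) {a b : ℝ} (ha : 0 < a) (hab : a ≤ b) :
    IntervalIntegrable (fun r => f r / r) MeasureTheory.volume a b := by
  apply ContinuousOn.intervalIntegrable
  apply hf.continuousOn.div continuousOn_id
  intro x hx
  rw [Set.uIcc_of_le hab] at hx
  exact ne_of_gt (lt_of_lt_of_le ha hx.1)

lemma ksm_cont (φ : ℝ) : Continuous (ksm φ) := by
  unfold ksm; fun_prop

lemma kms_cont (ψ μ ω : ℝ) : Continuous (kms ψ μ ω) := by
  unfold kms; fun_prop

/-- Strict monotonicity of the speed ratio in the remaining resource level: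
s(a) = I₁(a,R⁺)/I₂(a,R⁺) is strictly decreasing on (0, R⁺). -/
theorem speed_ratio_strictAnti (φ ψ μ ω Rplus : ℝ)
    (hφ0 : 0 < φ) (hφ1 : φ ≤ 1) (hμ0 : 0 < μ) (hμψ : μ ≤ ψ) (hω : 0 < ω)
    (hne : φ < 1 ∨ μ < ψ) (hRp : 0 < Rplus) :
    ∀ a₁ a₂ : ℝ, 0 < a₁ → a₁ < a₂ → a₂ < Rplus →
      I1 φ a₂ Rplus / I2 ψ μ ω a₂ Rplus < I1 φ a₁ Rplus / I2 ψ μ ω a₁ Rplus := by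
  intro a₁ a₂ h1 h12 h2R
  have h2 : 0 < a₂ := h1.trans h12
  set A : ℝ := I1 φ a₁ a₂ with hA
  set B : ℝ := I1 φ a₂ Rplus with hB
  set C : ℝ := I2 ψ μ ω a₁ a₂ with hC
  set D : ℝ := I2 ψ μ ω a₂ Rplus with hD
  have hFa₂ := ksm_pos hφ0 hφ1 a₂
  have hGa₂ := kms_pos hμ0 hμψ hω (R := a₂) h2.le
  -- integrability
  have iF1 := integrable_div (ksm_cont φ) h1 h12.le
  have iF2 := integrable_div (ksm_cont φ) h2 h2R.le
  have iG1 := integrable_div (kms_cont ψ μ ω) h1 h12.le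
  have iG2 := integrable_div (kms_cont ψ μ ω) h2 h2R.le
  -- split I1, I2
  have hsplit1 : I1 φ a₁ Rplus = A + B := by
    rw [hA, hB]; unfold I1
    exact (intervalIntegral.integral_add_adjacent_intervals iF1 iF2).symm
  have hsplit2 : I2 ψ μ ω a₁ Rplus = C + D := by
    rw [hC, hD]; unfold I2
    exact (intervalIntegral.integral_add_adjacent_intervals iG1 iG2).symm
  -- positivity of C and D
  have hCpos : 0 < C := by
    rw [hC]; unfold I2
    apply intervalIntegral.intervalIntegral_pos_of_pos_on iG1 _ h12
    intro x hx
    exact div_pos (kms_pos hμ0 hμψ hω (le_of_lt (h1.trans hx.1))) (h1.trans hx.1)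
  have hDpos : 0 < D := by
    rw [hD]; unfold I2
    apply intervalIntegral.intervalIntegral_pos_of_pos_on iG2 _ h2R
    intro x hx
    exact div_pos (kms_pos hμ0 hμψ hω (le_of_lt (h2.trans hx.1))) (h2.trans hx.1)
  -- key strict inequalities
  have key1 : ksm φ a₂ * C < kms ψ μ ω a₂ * A := by
    have heq : kms ψ μ ω a₂ * A - ksm φ a₂ * C
        = ∫ r in a₁..a₂, (kms ψ μ ω a₂ * (ksm φ r / r) - ksm φ a₂ * (kms ψ μ ω r / r)) := by
      rw [intervalIntegral.integral_sub (iF1.const_mul _) (iG1.const_mul _),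
        intervalIntegral.integral_const_mul, intervalIntegral.integral_const_mul]
      rw [hA, hC]; unfold I1 I2; ring
    have hpos : 0 < kms ψ μ ω a₂ * A - ksm φ a₂ * C := by
      rw [heq]
      apply intervalIntegral.intervalIntegral_pos_of_pos_on
        ((iF1.const_mul _).sub (iG1.const_mul _)) _ h12
      intro x hx
      have hx0 : 0 < x := h1.trans hx.1
      have hc := cross hφ0 hφ1 hμ0 hμψ hω hne hx0.le hx.2
      have : kms ψ μ ω a₂ * (ksm φ x / x) - ksm φ a₂ * (kms ψ μ ω x / x)
          = (ksm φ x * kms ψ μ ω a₂ - ksm φ a₂ * kms ψ μ ω x) / x := by ring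
      rw [this]
      exact div_pos (by linarith) hx0
    linarith
  have key2 : kms ψ μ ω a₂ * B < ksm φ a₂ * D := by
    have heq : ksm φ a₂ * D - kms ψ μ ω a₂ * B
        = ∫ r in a₂..Rplus, (ksm φ a₂ * (kms ψ μ ω r / r) - kms ψ μ ω a₂ * (ksm φ r / r)) := by
      rw [intervalIntegral.integral_sub (iG2.const_mul _) (iF2.const_mul _),
        intervalIntegral.integral_const_mul, intervalIntegral.integral_const_mul]
      rw [hB, hD]; unfold I1 I2; ring
    have hpos : 0 < ksm φ a₂ * D - kms ψ μ ω a₂ * B := by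
      rw [heq]
      apply intervalIntegral.intervalIntegral_pos_of_pos_on
        ((iG2.const_mul _).sub (iF2.const_mul _)) _ h2R
      intro x hx
      have hx0 : 0 < x := h2.trans hx.1
      have hc := cross hφ0 hφ1 hμ0 hμψ hω hne h2.le hx.1
      have : ksm φ a₂ * (kms ψ μ ω x / x) - kms ψ μ ω a₂ * (ksm φ x / x)
          = (ksm φ a₂ * kms ψ μ ω x - ksm φ x * kms ψ μ ω a₂) / x := by ring
      rw [this]
      exact div_pos (by linarith) hx0
    linarith
  -- combine: A*D > B*C
  have hADBC : B * C < A * D := by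
    nlinarith [mul_pos hCpos hDpos]
  rw [hsplit1, hsplit2, div_lt_div_iff₀ hDpos (by linarith : (0:ℝ) < C + D)]
  nlinarith
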